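/- For the greedy-choice sequence with r = 2 and s = 1: for every integer k ≥ 2, p_k > 1 − 2/log(k+1). -/

import Mathlib

lemma aux_E (n A L : ℝ) (hn : 8 ≤ n) (hA : 2 < A) (hAn : A ≤ n)
    (hd1 : 1 ≤ (n+1)*(L-A)) (hd2 : n*(L-A) ≤ 1) :
    n*(1-2/L)^2 + 2*(1-2/L) - 1 ≤ (n+1)*(1-2/A)^2 := by
  have hA0 : (0:ℝ) < A := by linarith
  have hL : A < L := by nlinarith
  have hL0 : 0 < L := by linarith
  set d := L - A with hd
  have hdpos : 0 < d := by linarith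
  have hdn : d ≤ 1/8 := by nlinarith
  have h3 : d*A^2 ≤ A := by nlinarith [mul_le_mul_of_nonneg_left hAn (le_of_lt hdpos)]
  have h1 : (n+1)*d*A ≥ A := by nlinarith
  have h4 : (n+1)*d^2 ≤ 2*d := by nlinarith
  have hE : 0 < A^2 + (n+1)*d*A*(2-A) + (n+1)*d^2*(1-A) := by
    nlinarith [mul_le_mul_of_nonneg_right h4 (by linarith : (0:ℝ) ≤ A - 1),
      mul_le_mul_of_nonneg_right hdn (by positivity : (0:ℝ) ≤ A^2)]
  have key : (n+1)*(1-2/A)^2 - (n*(1-2/L)^2 + 2*(1-2/L) - 1)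
      = 4*(A^2 + (n+1)*d*A*(2-A) + (n+1)*d^2*(1-A))/(A^2*L^2) := by
    rw [hd]; field_simp; ring
  nlinarith [div_pos (by linarith : (0:ℝ) < 4*(A^2 + (n+1)*d*A*(2-A) + (n+1)*d^2*(1-A))) (by positivity : (0:ℝ) < A^2*L^2), key]

lemma aux_exp2 : (7:ℝ) < Real.exp 2 := by
  have h := Real.exp_one_gt_d9
  have : Real.exp 2 = Real.exp 1 * Real.exp 1 := by
    rw [← Real.exp_add]; norm_num
  nlinarith

lemma aux_log_lt_two {x : ℝ} (hx : 0 < x) (h7 : x ≤ 7) : Real.log x < 2 := by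
  by_contra h
  push_neg at h
  have := Real.exp_le_exp.2 h
  rw [Real.exp_log hx] at this
  linarith [aux_exp2]

lemma aux_log8 : 2 < Real.log 8 ∧ Real.log 8 < 2.08 := by
  have h8 : (8:ℝ) = 2^3 := by norm_num
  have : Real.log 8 = 3 * Real.log 2 := by
    rw [h8, Real.log_pow]; norm_num
  constructor <;> rw [this] <;>
    nlinarith [Real.log_two_gt_d9, Real.log_two_lt_d9]

theorem stmt_16 (p : ℕ → ℝ) (hp0 : p 0 = 0)
    (hp : ∀ k, 1 ≤ k → p k ∈ Set.Ioo (0 : ℝ) 1 ∧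
      ((k : ℝ) + 1) * p (k - 1) ^ 2 - (k : ℝ) * p k ^ 2 - 2 * p k + 1 = 0) :
    ∀ k : ℕ, 2 ≤ k → 1 - 2 / Real.log ((k : ℝ) + 1) < p k := by
  intro k hk
  induction k, hk using Nat.le_induction with
  | base =>
    have hpos : (0:ℝ) < p 2 := (hp 2 (by norm_num)).1.1
    have h3 : ((2:ℕ):ℝ) + 1 = 3 := by norm_num
    rw [h3]
    have hl2 : Real.log 3 < 2 := aux_log_lt_two (by norm_num) (by norm_num)
    have hl0 : (0:ℝ) < Real.log 3 := Real.log_pos (by norm_num)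
    have : 1 < 2 / Real.log 3 := (one_lt_div hl0).2 hl2
    linarith
  | succ n hn ih =>
    obtain ⟨⟨hq0, hq1⟩, _⟩ := hp n (by omega)
    obtain ⟨⟨hP0, hP1⟩, hrec⟩ := hp (n+1) (by omega)
    simp only [Nat.add_sub_cancel] at hrec
    push_cast at hrec ih ⊢
    obtain ⟨N, hN⟩ : ∃ N : ℝ, N = (n:ℝ) + 1 := ⟨_, rfl⟩
    rw [← hN] at hrec ih ⊢
    -- hrec : (N + 1) * p n ^ 2 - N * p (n+1) ^ 2 - 2 * p (n+1) + 1 = 0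
    rcases lt_trichotomy n 6 with h6 | h6 | h6
    · -- n ≤ 5 : trivial since log(N+1) < 2
      have hN7 : N + 1 ≤ 7 := by
        rw [hN]; push_cast
        have : (n:ℝ) ≤ 5 := by exact_mod_cast Nat.lt_succ_iff.mp h6
        linarith
      have hN3 : (3:ℝ) ≤ N + 1 := by
        rw [hN]; push_cast
        have : (2:ℝ) ≤ (n:ℝ) := by exact_mod_cast hn
        linarith
      have hl2 : Real.log (N + 1) < 2 := aux_log_lt_two (by linarith) hN7
      have hl0 : 0 < Real.log (N + 1) := Real.log_pos (by linarith)
      have : 1 < 2 / Real.log (N + 1) := (one_lt_div hl0).2 hl2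
      linarith
    · -- n = 6 : N + 1 = 8
      subst h6
      rw [hN] at hrec ⊢
      norm_num at hrec ⊢
      obtain ⟨hl2, hl2'⟩ := aux_log8
      have hl0 : (0:ℝ) < Real.log 8 := by linarith
      obtain ⟨t, ht⟩ : ∃ t : ℝ, t = 1 - 2 / Real.log 8 := ⟨_, rfl⟩
      rw [← ht]
      have ht0 : 0 < t := by
        rw [ht]
        have : 2 / Real.log 8 < 1 := (div_lt_one hl0).2 (by linarith)
        linarith
      have ht1 : t < 0.04 := by
        rw [ht]
        have : (0.96:ℝ) < 2 / Real.log 8 := by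
          rw [lt_div_iff₀ hl0]; linarith
        linarith
      have hft : 7 * t^2 + 2*t - 1 < 0 := by
        have ht2 : t^2 < 0.0016 := by
          nlinarith [mul_lt_mul'' ht1 ht1 (le_of_lt ht0) (le_of_lt ht0)]
        nlinarith
      by_contra hcon
      push_neg at hcon
      have h77 : p 7 ^ 2 ≤ t ^ 2 := pow_le_pow_left₀ (le_of_lt hP0) hcon 2
      linarith [pow_two_nonneg (p 6)]
    · -- n ≥ 7 : main case
      have hn7 : (7:ℝ) ≤ (n:ℝ) := by exact_mod_cast h6
      have hN8 : (8:ℝ) ≤ N := by rw [hN]; linarith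
      obtain ⟨A, hA⟩ : ∃ A : ℝ, A = Real.log N := ⟨_, rfl⟩
      obtain ⟨L, hL⟩ : ∃ L : ℝ, L = Real.log (N+1) := ⟨_, rfl⟩
      rw [← hA] at ih
      rw [← hL]
      have hNpos : (0:ℝ) < N := by linarith
      have hN1pos : (0:ℝ) < N + 1 := by linarith
      have hA2 : 2 < A := by
        have h8 : Real.log 8 ≤ A := by
          rw [hA]; exact Real.log_le_log (by norm_num) hN8
        linarith [aux_log8.1]
      have hAn : A ≤ N := by
        rw [hA]
        have := Real.log_le_sub_one_of_pos hNpos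
        linarith
      have hd2 : N * (L - A) ≤ 1 := by
        rw [hA, hL]
        have h := Real.log_le_sub_one_of_pos (by positivity : (0:ℝ) < (N+1)/N)
        rw [Real.log_div (by linarith) (by linarith)] at h
        have h2 : (N+1)/N - 1 = 1/N := by field_simp; ring
        rw [h2] at h
        have h3 : N * (Real.log (N+1) - Real.log N) ≤ N * (1/N) :=
          mul_le_mul_of_nonneg_left h (le_of_lt hNpos)
        have h4 : N * (1/N) = 1 := by field_simp
        linarith
      have hd1 : 1 ≤ (N+1) * (L - A) := by
        rw [hA, hL]
        have h := Real.log_le_sub_one_of_pos (by positivity : (0:ℝ) < N/(N+1))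
        rw [Real.log_div (by linarith) (by linarith)] at h
        have h2 : N/(N+1) - 1 = -(1/(N+1)) := by field_simp; ring
        rw [h2] at h
        have h3 : (N+1) * (1/(N+1)) ≤ (N+1) * (Real.log (N+1) - Real.log N) :=
          mul_le_mul_of_nonneg_left (by linarith) (by linarith)
        have h4 : (N+1) * (1/(N+1)) = 1 := by field_simp
        linarith
      have hkey := aux_E N A L hN8 hA2 hAn hd1 hd2
      -- IH : 1 - 2/A < p n
      have hih : 1 - 2/A < p n := ih
      have hA0 : (0:ℝ) < A := by linarith
      have h1a : (0:ℝ) ≤ 1 - 2/A := by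
        have : 2/A ≤ 1 := by rw [div_le_one hA0]; linarith
        linarith
      have hq2 : (1 - 2/A)^2 < (p n)^2 := by
        apply pow_lt_pow_left₀ hih h1a
        norm_num
      have hmain : N * (1-2/L)^2 + 2*(1-2/L) - 1 < (N+1) * (p n)^2 := by
        have : (N+1) * (1-2/A)^2 < (N+1) * (p n)^2 :=
          (mul_lt_mul_iff_right₀ hN1pos).2 hq2
        linarith
      by_contra hcon
      push_neg at hcon
      -- p (n+1) ≤ 1 - 2/L, with p (n+1) > 0
      have hP2 : (p (n+1))^2 ≤ (1 - 2/L)^2 :=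
        pow_le_pow_left₀ (le_of_lt hP0) hcon 2
      have hNP : N * (p (n+1))^2 ≤ N * (1-2/L)^2 :=
        mul_le_mul_of_nonneg_left hP2 (by linarith)
      linarith
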